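/- Let Δ₂, Δ₃ ∈ ℝ with Δ₃ ≠ 0 and Δ₁ := Δ₂² − 4Δ₃ < 0, and let ε ∈ ℝ. Define f(s) := (1 + Δ₂ s² + Δ₃ s⁴)^{1/4} · exp( (Δ₂/(2√(−Δ₁))) · ( arctan((Δ₂ + 2Δ₃ s²)/√(−Δ₁)) − arctan(Δ₂/√(−Δ₁)) ) ). Then for all s ∈ ℝ one has 1 + Δ₂ s² + Δ₃ s⁴ > 0, and the function u(s) := 1 + 2ε ∫₀ˢ f(σ) dσ satisfies equation (E₀), i.e. (1 + Δ₂ s² + Δ₃ s⁴) u''(s) = s(Δ₂ + Δ₃ s²) u'(s) for all s ∈ ℝ, together with u(0) = 1 and u'(0) = 2ε. -/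

import Mathlib

/-- The integrand `f` in the case `Δ₃ ≠ 0`, `Δ₁ := Δ₂² − 4Δ₃ < 0`:
`f(s) = (1 + Δ₂ s² + Δ₃ s⁴)^{1/4} ·
  exp( (Δ₂/(2√(−Δ₁))) (arctan((Δ₂ + 2Δ₃ s²)/√(−Δ₁)) − arctan(Δ₂/√(−Δ₁))) )`. -/
noncomputable def f9 (Δ₂ Δ₃ : ℝ) (s : ℝ) : ℝ :=
  (1 + Δ₂ * s ^ 2 + Δ₃ * s ^ 4) ^ ((1 : ℝ) / 4) *
    Real.exp ((Δ₂ / (2 * Real.sqrt (-(Δ₂ ^ 2 - 4 * Δ₃)))) *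
      (Real.arctan ((Δ₂ + 2 * Δ₃ * s ^ 2) / Real.sqrt (-(Δ₂ ^ 2 - 4 * Δ₃))) -
        Real.arctan (Δ₂ / Real.sqrt (-(Δ₂ ^ 2 - 4 * Δ₃)))))

/-- `u(s) = 1 + 2ε ∫₀ˢ f(σ) dσ`. -/
noncomputable def u9 (Δ₂ Δ₃ ε : ℝ) (s : ℝ) : ℝ :=
  1 + 2 * ε * ∫ σ in (0:ℝ)..s, f9 Δ₂ Δ₃ σ

section aux
variable (Δ₂ Δ₃ : ℝ)

lemma hPpos (hΔ₃ : Δ₃ ≠ 0) (hΔ₁ : Δ₂ ^ 2 - 4 * Δ₃ < 0) (s : ℝ) :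
    0 < 1 + Δ₂ * s ^ 2 + Δ₃ * s ^ 4 := by
  nlinarith [sq_nonneg (2 * Δ₃ * s ^ 2 + Δ₂), sq_nonneg s, sq_nonneg (s^2)]

lemma f9_cont (hΔ₃ : Δ₃ ≠ 0) (hΔ₁ : Δ₂ ^ 2 - 4 * Δ₃ < 0) : Continuous (f9 Δ₂ Δ₃) := by
  apply Continuous.mul
  · apply Continuous.rpow_const (by continuity)
    intro s; exact Or.inl (ne_of_gt (hPpos Δ₂ Δ₃ hΔ₃ hΔ₁ s))
  · apply Real.continuous_exp.comp
    continuity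

lemma hasDerivAt_f9 (hΔ₃ : Δ₃ ≠ 0) (hΔ₁ : Δ₂ ^ 2 - 4 * Δ₃ < 0) (s : ℝ) :
    HasDerivAt (f9 Δ₂ Δ₃)
      (s * (Δ₂ + Δ₃ * s ^ 2) / (1 + Δ₂ * s ^ 2 + Δ₃ * s ^ 4) * f9 Δ₂ Δ₃ s) s := by
  set D : ℝ := -(Δ₂ ^ 2 - 4 * Δ₃) with hD
  have hDpos : 0 < D := by simp [hD]; linarith
  set q : ℝ := Real.sqrt D with hq
  have hqpos : 0 < q := Real.sqrt_pos.mpr hDpos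
  have hq2 : q ^ 2 = D := Real.sq_sqrt hDpos.le
  have hPs := hPpos Δ₂ Δ₃ hΔ₃ hΔ₁ s
  set P : ℝ := 1 + Δ₂ * s ^ 2 + Δ₃ * s ^ 4 with hPdef
  -- derivative of P
  have hP' : HasDerivAt (fun s : ℝ => 1 + Δ₂ * s ^ 2 + Δ₃ * s ^ 4)
      (2 * Δ₂ * s + 4 * Δ₃ * s ^ 3) s := by
    have h := (((hasDerivAt_pow 2 s).const_mul Δ₂).const_add 1).add
      ((hasDerivAt_pow 4 s).const_mul Δ₃)
    exact h.congr_deriv (by push_cast; ring)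
  have hR : HasDerivAt (fun s : ℝ => (1 + Δ₂ * s ^ 2 + Δ₃ * s ^ 4) ^ ((1:ℝ)/4))
      (((1:ℝ)/4) * P ^ ((1:ℝ)/4 - 1) * (2 * Δ₂ * s + 4 * Δ₃ * s ^ 3)) s := by
    have := hP'.rpow_const (p := (1:ℝ)/4) (Or.inl hPs.ne')
    convert this using 1; ring
  have hg : HasDerivAt (fun s : ℝ => (Δ₂ + 2 * Δ₃ * s ^ 2) / q)
      (4 * Δ₃ * s / q) s := by
    have h := (((hasDerivAt_pow 2 s).const_mul (2*Δ₃)).const_add Δ₂).div_const q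
    exact h.congr_deriv (by push_cast; ring)
  set g : ℝ := (Δ₂ + 2 * Δ₃ * s ^ 2) / q with hgdef
  have ha : HasDerivAt (fun s : ℝ => Real.arctan ((Δ₂ + 2 * Δ₃ * s ^ 2) / q))
      (1 / (1 + g ^ 2) * (4 * Δ₃ * s / q)) s :=
    by exact (Real.hasDerivAt_arctan g).comp s hg
  set c : ℝ := Δ₂ / (2 * q) with hcdef
  have hE : HasDerivAt (fun s : ℝ => Real.exp (c *
      (Real.arctan ((Δ₂ + 2 * Δ₃ * s ^ 2) / q) - Real.arctan (Δ₂ / q))))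
      (Real.exp (c * (Real.arctan g - Real.arctan (Δ₂ / q))) *
        (c * (1 / (1 + g ^ 2) * (4 * Δ₃ * s / q)))) s := by
    exact (((ha.sub_const _).const_mul c).exp)
  have h := hR.mul hE
  have hfeq : f9 Δ₂ Δ₃ = fun s : ℝ =>
      (1 + Δ₂ * s ^ 2 + Δ₃ * s ^ 4) ^ ((1:ℝ)/4) *
      Real.exp (c * (Real.arctan ((Δ₂ + 2 * Δ₃ * s ^ 2) / q) - Real.arctan (Δ₂ / q))) := by
    rfl
  rw [hfeq]
  refine h.congr_deriv (Eq.symm ?_)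
  beta_reduce
  have hsub : P ^ ((1:ℝ)/4 - 1) = P ^ ((1:ℝ)/4) / P := by
    rw [Real.rpow_sub hPs, Real.rpow_one]
  rw [← hgdef, hsub, ← hPdef]
  have key : s * (Δ₂ + Δ₃ * s ^ 2) / P
      = 1 / 4 * (2 * Δ₂ * s + 4 * Δ₃ * s ^ 3) / P
        + c * (1 / (1 + g ^ 2) * (4 * Δ₃ * s / q)) := by
    have hD4 : 0 < 4 * Δ₃ := by nlinarith
    have hone : (1:ℝ) + g ^ 2 = (4 * Δ₃ * P) / D := by
      rw [hgdef]
      field_simp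
      rw [hq2, hPdef, hD]
      ring
    rw [hone, hcdef]
    field_simp
    linear_combination (4*Δ₂*s) * hq2
  linear_combination (Real.exp (c * (Real.arctan g - Real.arctan (Δ₂ / q)))
    * P ^ ((1:ℝ)/4)) * key
end aux

theorem stmt9 (Δ₂ Δ₃ ε : ℝ) (hΔ₃ : Δ₃ ≠ 0) (hΔ₁ : Δ₂ ^ 2 - 4 * Δ₃ < 0) :
    (∀ s : ℝ, 0 < 1 + Δ₂ * s ^ 2 + Δ₃ * s ^ 4) ∧
    (∀ s : ℝ,
      (1 + Δ₂ * s ^ 2 + Δ₃ * s ^ 4) * deriv (deriv (u9 Δ₂ Δ₃ ε)) s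
        = s * (Δ₂ + Δ₃ * s ^ 2) * deriv (u9 Δ₂ Δ₃ ε) s) ∧
    u9 Δ₂ Δ₃ ε 0 = 1 ∧
    deriv (u9 Δ₂ Δ₃ ε) 0 = 2 * ε := by
  have hP := hPpos Δ₂ Δ₃ hΔ₃ hΔ₁
  have hcont := f9_cont Δ₂ Δ₃ hΔ₃ hΔ₁
  have hu' : deriv (u9 Δ₂ Δ₃ ε) = fun s => 2 * ε * f9 Δ₂ Δ₃ s := by
    funext s
    have hI : HasDerivAt (fun t => ∫ σ in (0:ℝ)..t, f9 Δ₂ Δ₃ σ) (f9 Δ₂ Δ₃ s) s :=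
      intervalIntegral.integral_hasDerivAt_right (hcont.intervalIntegrable _ _)
        (hcont.stronglyMeasurableAtFilter _ _) hcont.continuousAt
    have : HasDerivAt (u9 Δ₂ Δ₃ ε) (2 * ε * f9 Δ₂ Δ₃ s) s := by
      unfold u9
      exact (hI.const_mul (2 * ε)).const_add 1
    exact this.deriv
  have hf0 : f9 Δ₂ Δ₃ 0 = 1 := by
    simp [f9]
  refine ⟨hP, ?_, ?_, ?_⟩
  · intro s
    have h2 : HasDerivAt (fun t => 2 * ε * f9 Δ₂ Δ₃ t)
        (2 * ε * (s * (Δ₂ + Δ₃ * s ^ 2) / (1 + Δ₂ * s ^ 2 + Δ₃ * s ^ 4) * f9 Δ₂ Δ₃ s)) s :=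
      (hasDerivAt_f9 Δ₂ Δ₃ hΔ₃ hΔ₁ s).const_mul (2 * ε)
    rw [hu', h2.deriv]
    have hne := (hP s).ne'
    field_simp
    rw [div_eq_iff (by convert hne using 1; ring)]
    ring
  · unfold u9; simp
  · rw [hu']; simp [hf0]
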